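/- In a proper *-ring A (not necessarily unital), a projection p (p = p^2 = p^*) and an element a ∈ A_+ with p = pa satisfy a − p ∈ A_+. -/

import Mathlib

open Pointwise

/-- Finite sums of elements of the form `star a * a`. -/
def sSums (A : Type*) [Ring A] [StarRing A] : Set A :=
  (AddSubmonoid.closure {x : A | ∃ a : A, x = star a * a} : Set A)

/-- The *-positive elements. -/
def pos (A : Type*) [Ring A] [StarRing A] : Set A :=
  {a : A | ∃ n : ℕ, 0 < n ∧ n • a ∈ sSums A}

/-- The *-accretive elements. -/
def accr (A : Type*) [Ring A] [StarRing A] : Set A :=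
  {a : A | a + star a ∈ pos A}

/-- The order `a ⪯ b ⟺ b - a ∈ 𝔯`. -/
def ple {A : Type*} [Ring A] [StarRing A] (a b : A) : Prop := b - a ∈ accr A

/-- The cone `𝔠`. -/
def cone (A : Type*) [Ring A] [StarRing A] : Set A :=
  {a : A | ∃ n : ℕ, 0 < n ∧ ple (star a * a) (n • a)}

/-- The ball `𝔅`. -/
def ball (A : Type*) [Ring A] [StarRing A] : Set A :=
  {a : A | ple (star a * a) 1}


lemma sSums_star_self {A : Type*} [Ring A] [StarRing A] {x : A} (hx : x ∈ sSums A) :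
    star x = x := by
  induction hx using AddSubmonoid.closure_induction with
  | mem y hy => obtain ⟨b, rfl⟩ := hy; simp [mul_assoc]
  | zero => simp
  | add y z _ _ hy hz => simp [star_add, hy, hz, add_comm]

lemma sSums_conj {A : Type*} [Ring A] [StarRing A] {x : A} (hx : x ∈ sSums A) (c : A) :
    star c * x * c ∈ sSums A := by
  induction hx using AddSubmonoid.closure_induction with
  | mem y hy =>
      obtain ⟨b, rfl⟩ := hy
      exact AddSubmonoid.subset_closure ⟨b * c, by simp [mul_assoc]⟩
  | zero => simp only [mul_zero, zero_mul]; exact (AddSubmonoid.closure {x : A | ∃ a : A, x = star a * a}).zero_mem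
  | add y z _ _ hy hz =>
      have : star c * (y + z) * c = star c * y * c + star c * z * c := by noncomm_ring
      rw [this]
      exact (AddSubmonoid.closure _).add_mem hy hz

theorem stmt14 {A : Type*} [Ring A] [StarRing A]
    (proper : ∀ a : A, star a * a = 0 → a = 0)
    (salient : sSums A ∩ (-sSums A) = {0})
    (p a : A) (hp : p * p = p) (hp' : star p = p)
    (ha : a ∈ pos A) (h : p = p * a) : a - p ∈ pos A := by
  obtain ⟨n, hn, hs⟩ := ha
  set s := n • a with hsdef
  have hstar : star s = s := sSums_star_self hs
  have hps : p * s = n • p := by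
    rw [hsdef, mul_smul_comm, ← h]
  have hsp : s * p = n • p := by
    have := congrArg star hps
    rwa [star_mul, hstar, hp', star_nsmul, hp'] at this
  refine ⟨n, hn, ?_⟩
  have hconj := sSums_conj hs (1 - p)
  have hq : star (1 - p) = 1 - p := by rw [star_sub, star_one, hp']
  rw [hq] at hconj
  have : (1 - p) * s * (1 - p) = n • (a - p) := by
    have : (1 - p) * s * (1 - p) = s - p * s - s * p + p * (s * p) := by noncomm_ring
    rw [this, hps, hsp, mul_smul_comm, hp, hsdef, smul_sub]
    abel
  rwa [this] at hconj
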